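/- Under the construction hypotheses (a distributive lattice D, groups G_α, and transitive isomorphisms φ_{α,β} for β ≤ α with ψ = φ^{-1}), the additive semigroup (S, +) on S = Σ_{α∈D} G_α is a left normal band: x + x = x for all x ∈ S, and x + y + z = x + z + y for all x, y, z ∈ S. -/

import Mathlib

variable {D : Type*} [DistribLattice D] {G : D → Type*} [∀ α : D, Group (G α)]

/-- Multiplication on the disjoint union `S = Σ α, G α`:
`(α, x) · (β, y) = (αβ, φ_{α,αβ}(x) · φ_{β,αβ}(y))`. -/
def cMul (φ : ∀ α β : D, β ≤ α → (G α ≃* G β)) (s t : Σ α : D, G α) :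
    Σ α : D, G α :=
  ⟨s.1 ⊓ t.1,
    φ s.1 (s.1 ⊓ t.1) inf_le_left s.2 * φ t.1 (s.1 ⊓ t.1) inf_le_right t.2⟩

/-- Addition on the disjoint union `S = Σ α, G α`:
`(α, x) + (β, y) = (α + β, ψ_{α,α+β}(x))`, where `ψ_{β,α} = (φ_{α,β})⁻¹`
for `β ≤ α` (each `G α` carries the left-zero addition). -/
def cAdd (φ : ∀ α β : D, β ≤ α → (G α ≃* G β)) (s t : Σ α : D, G α) :
    Σ α : D, G α :=
  ⟨s.1 ⊔ t.1, (φ (s.1 ⊔ t.1) s.1 le_sup_left).symm s.2⟩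

/-- Under the construction hypotheses, the additive
semigroup `(S, +)` on `S = Σ α, G α` is a left normal band:
`x + x = x` for all `x ∈ S` and `x + y + z = x + z + y` for all
`x, y, z ∈ S`. -/
theorem construction_add_left_normal_band
    (φ : ∀ α β : D, β ≤ α → (G α ≃* G β))
    (hφ_id : ∀ (α : D) (x : G α), φ α α le_rfl x = x)
    (hφ_trans : ∀ {α β γ : D} (h1 : γ ≤ β) (h2 : β ≤ α) (x : G α),
      φ β γ h1 (φ α β h2 x) = φ α γ (h1.trans h2) x)
    :
    (∀ x : Σ α : D, G α, cAdd φ x x = x) ∧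
    (∀ x y z : Σ α : D, G α,
      cAdd φ (cAdd φ x y) z = cAdd φ (cAdd φ x z) y) := by
  have hpsi : ∀ {α β γ : D} (h1 : α ≤ β) (h2 : β ≤ γ) (x : G α),
      (φ γ β h2).symm ((φ β α h1).symm x) = (φ γ α (h1.trans h2)).symm x := by
    intro α β γ h1 h2 x
    apply (φ γ β h2).injective
    apply (φ β α h1).injective
    simp [hφ_trans h1 h2]
  have key : ∀ (x : Σ α : D, G α) (s : D) (h : x.1 ≤ s),
      (⟨s, (φ s x.1 h).symm x.2⟩ : Σ α : D, G α) =
      (⟨s, (φ s x.1 h).symm x.2⟩ : Σ α : D, G α) := fun _ _ _ => rfl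
  constructor
  · rintro ⟨α, a⟩
    refine Sigma.ext (sup_idem α) ?_
    simp only [cAdd]
    have key2 : ∀ (s : D) (hs : α = s) (h' : α ≤ s),
        HEq ((φ s α h').symm a) a := by
      rintro s rfl h'
      have h2 := hφ_id α ((φ α α h').symm a)
      rw [MulEquiv.apply_symm_apply] at h2
      exact heq_of_eq h2.symm
    exact key2 _ (sup_idem α).symm _
  · rintro ⟨α, a⟩ ⟨β, b⟩ ⟨γ, c⟩
    delta cAdd
    have h : α ⊔ β ⊔ γ = α ⊔ γ ⊔ β := sup_right_comm α β γ
    refine Sigma.ext h ?_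
    rw [hpsi le_sup_left le_sup_left, hpsi le_sup_left le_sup_left]
    have : ∀ (s t : D) (hst : s = t) (h1 : α ≤ s) (h2 : α ≤ t),
        HEq ((φ s α h1).symm a) ((φ t α h2).symm a) := by
      rintro s t rfl h1 h2; rfl
    exact this _ _ h _ _
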